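/- Let n = 2m with m ≥ 2, λ = (m, m), and W = ⟨e_1⟩ ⊆ V_λ. Then W is isotropic for β_λ, W^⊥ = ⟨e_1, …, e_m, f_1, …, f_{m−1}⟩, and x_λ(W) ⊆ W, x_λ(W^⊥) ⊆ W^⊥. Moreover, with ν = (m−1, m−1), the linear map Q : W^⊥/W → V_ν determined by Q(e_{j+1} + W) = −√−1·e_j and Q(f_j + W) = −√−1·f_j for 1 ≤ j ≤ m−1 is a linear isomorphism satisfying β̄_λ(u, v) = β_ν(Q u, Q v) for all u, v ∈ W^⊥/W, and Q ∘ x̄_λ = x_ν ∘ Q. -/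

import Mathlib

open Complex Submodule

noncomputable section

/-- `V p q` is the vector space `ℂ^(p+q)` with coordinates indexed by `Fin p ⊕ Fin q`,
corresponding to the basis `e_1, …, e_p, f_1, …, f_q` of `V_λ` for `λ = (p, q)`. -/
abbrev V (p q : ℕ) := (Fin p ⊕ Fin q) → ℂ

/-- The basis vector `e_i` (1-based index `i`; it is `0` if `i` is out of range). -/
def ee (p q : ℕ) (i : ℕ) : V p q :=
  Sum.elim (fun j => if (j : ℕ) + 1 = i then 1 else 0) (fun _ => 0)

/-- The basis vector `f_j` (1-based index `j`; it is `0` if `j` is out of range). -/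
def ff (p q : ℕ) (i : ℕ) : V p q :=
  Sum.elim (fun _ => 0) (fun j => if (j : ℕ) + 1 = i then 1 else 0)

/-- The nilpotent endomorphism `x_λ` with `x(e_i) = e_{i-1}`, `x(f_j) = f_{j-1}`. -/
def xmap (p q : ℕ) : V p q →ₗ[ℂ] V p q where
  toFun v := Sum.elim
    (fun j => if h : (j : ℕ) + 1 < p then v (Sum.inl ⟨(j : ℕ) + 1, h⟩) else 0)
    (fun j => if h : (j : ℕ) + 1 < q then v (Sum.inr ⟨(j : ℕ) + 1, h⟩) else 0)
  map_add' u v := by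
    funext s; cases s <;> dsimp <;> split <;> simp
  map_smul' c v := by
    funext s; cases s <;> dsimp <;> split <;> simp

/-- The Gram matrix of the bilinear form `β_λ` for `λ = (p, q)` (0-based indices). -/
def gram (p q : ℕ) : Matrix (Fin p ⊕ Fin q) (Fin p ⊕ Fin q) ℂ :=
  fun s t =>
    match s, t with
    | Sum.inl i, Sum.inl j =>
        if p = q then 0 else if (i : ℕ) + (j : ℕ) + 2 = p + 1 then (-1 : ℂ) ^ (i : ℕ) else 0
    | Sum.inl i, Sum.inr j =>
        if p = q then (if (i : ℕ) + (j : ℕ) + 2 = p + 1 then (-1 : ℂ) ^ (i : ℕ) else 0) else 0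
    | Sum.inr i, Sum.inl j =>
        if p = q then (if (j : ℕ) + (i : ℕ) + 2 = p + 1 then (-1 : ℂ) ^ (j : ℕ) else 0) else 0
    | Sum.inr i, Sum.inr j =>
        if p = q then 0 else if (i : ℕ) + (j : ℕ) + 2 = q + 1 then (-1 : ℂ) ^ (i : ℕ) else 0

/-- The symmetric bilinear form `β_λ` for `λ = (p, q)`. -/
def beta (p q : ℕ) : LinearMap.BilinForm ℂ (V p q) :=
  Matrix.toLinearMap₂' ℂ (gram p q)

/-- Orthogonal complement with respect to `β_λ`. -/
def orth (p q : ℕ) (W : Submodule ℂ (V p q)) : Submodule ℂ (V p q) :=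
  (beta p q).orthogonal W

/-- The subspace `⟨e_1, …, e_r, f_1, …, f_s⟩`. -/
def EF (p q r s : ℕ) : Submodule ℂ (V p q) :=
  Submodule.span ℂ
    ({v | ∃ i, 1 ≤ i ∧ i ≤ r ∧ v = ee p q i} ∪ {v | ∃ j, 1 ≤ j ∧ j ≤ s ∧ v = ff p q j})

/-- A complete isotropic flag in `(V_λ, β_λ)`, encoded as a function `ℕ → Submodule`
which is `⊤` from degree `p+q` on. -/
def IsFlag (p q : ℕ) (F : ℕ → Submodule ℂ (V p q)) : Prop :=
  (∀ i ≤ p + q, Module.finrank ℂ (F i) = i) ∧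
  (∀ i < p + q, F i ≤ F (i + 1)) ∧
  (∀ i ≤ p + q, F (p + q - i) = orth p q (F i)) ∧
  (∀ i, p + q ≤ i → F i = ⊤)

/-- The flag `F` lies in the Springer fiber of `x_λ`. -/
def InSpringer (p q : ℕ) (F : ℕ → Submodule ℂ (V p q)) : Prop :=
  ∀ i < p + q, (F (i + 1)).map (xmap p q) ≤ F i
/-- The coordinate projection `V_(p,q) → V_(p',q')`, sending `e_i ↦ e_i` (resp. `f_j ↦ f_j`)
when the index is in range and to `0` otherwise. -/
def Pmap (p q p' q' : ℕ) : V p q →ₗ[ℂ] V p' q' where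
  toFun v := Sum.elim
    (fun i => if h : (i : ℕ) < p then v (Sum.inl ⟨(i : ℕ), h⟩) else 0)
    (fun j => if h : (j : ℕ) < q then v (Sum.inr ⟨(j : ℕ), h⟩) else 0)
  map_add' u v := by
    funext s; cases s <;> dsimp <;> split <;> simp
  map_smul' c v := by
    funext s; cases s <;> dsimp <;> split <;> simp

/-- The flag in `V_(p',q')` induced, via a linear map `Q` defined on `W^⊥` and killing `W`
(representing an isomorphism `W^⊥/W ≅ V_(p',q')`), by the part `F_l ⊆ F_{l+1} ⊆ …` of a
flag `F` in `V_(p,q)`:  `F''_i = Q(F_{l+i}/W)` for `i ≤ (p'+q')/2`, and the remaining spaces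
are determined by taking orthogonal complements with respect to `β_(p',q')`. -/
def Qflag (p q p' q' l : ℕ) (W : Submodule ℂ (V p q)) (Q : V p q →ₗ[ℂ] V p' q')
    (F : ℕ → Submodule ℂ (V p q)) : ℕ → Submodule ℂ (V p' q') :=
  fun i =>
    if i ≤ (p' + q') / 2 then (F (l + i) ⊓ orth p q W).map Q
    else if i ≤ p' + q' then orth p' q' ((F (l + (p' + q' - i)) ⊓ orth p q W).map Q)
    else ⊤

/-- The flag in `V_(2t,2t)` obtained from a flag `F` in `V_(p,q)` by applying the projection
`Pmap` to `F_0, …, F_{2t}` and completing by orthogonal complements. -/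
def Pflag (p q t : ℕ) (F : ℕ → Submodule ℂ (V p q)) : ℕ → Submodule ℂ (V (2*t) (2*t)) :=
  fun i =>
    if i ≤ 2*t then (F i).map (Pmap p q (2*t) (2*t))
    else if i ≤ 4*t then orth (2*t) (2*t) ((F (4*t - i)).map (Pmap p q (2*t) (2*t)))
    else ⊤

/-- The conditions determining the quotient isomorphism `Q^III_1 : W^⊥/W → V_ν`
(`W = ⟨e_1⟩`, `λ = (m,m)`, `ν = (m-1,m-1)`): `Q(e_{j+1} + W) = -√-1·e_j` and
`Q(f_j + W) = -√-1·f_j` for `1 ≤ j ≤ m-1`, encoded on an ambient linear map killing `W`. -/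
def QCondIII1 (m : ℕ) (Q : V m m →ₗ[ℂ] V (m-1) (m-1)) : Prop :=
  (∀ j, 1 ≤ j → j ≤ m - 1 → Q (ee m m (j+1)) = (-Complex.I) • ee (m-1) (m-1) j) ∧
  (∀ j, 1 ≤ j → j ≤ m - 1 → Q (ff m m j) = (-Complex.I) • ff (m-1) (m-1) j) ∧
  (∀ u ∈ EF m m 1 0, Q u = 0)

/-- Lemma 3.3(b), case `Q^III_1`.  For `λ = (m,m)`, `m ≥ 2`, `W = ⟨e_1⟩`:
`W` is isotropic, `W^⊥ = ⟨e_1, …, e_m, f_1, …, f_{m-1}⟩`, `W` and `W^⊥` are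
`x_λ`-invariant, and the map `Q : W^⊥/W → V_(m-1,m-1)` determined by
`Q(e_{j+1}+W) = -√-1·e_j`, `Q(f_j+W) = -√-1·f_j` is an isomorphism of quadratic
spaces satisfying `Q ∘ x̄_λ = x_ν ∘ Q`. -/
-- workhorse: beta on (n,n) as two single sums
lemma beta_nn (n : ℕ) (u v : V n n) :
    beta n n u v
      = (∑ i : Fin n, (-1:ℂ)^(i:ℕ) * u (Sum.inl i) * v (Sum.inr (Fin.rev i)))
      + ∑ j : Fin n, (-1:ℂ)^(j:ℕ) * u (Sum.inr (Fin.rev j)) * v (Sum.inl j) := by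
  rw [beta, Matrix.toLinearMap₂'_apply, Fintype.sum_sum_type]
  congr 1
  · refine Finset.sum_congr rfl fun i _ => ?_
    rw [Fintype.sum_sum_type]
    have h1 : ∀ j : Fin n, u (Sum.inl i) • v (Sum.inl j) • gram n n (Sum.inl i) (Sum.inl j) = 0 := by
      intro j; simp [gram]
    rw [Finset.sum_congr rfl (fun j _ => h1 j), Finset.sum_const_zero, zero_add]
    have h2 : ∀ j : Fin n, u (Sum.inl i) • v (Sum.inr j) • gram n n (Sum.inl i) (Sum.inr j)
        = if j = Fin.rev i then (-1:ℂ)^(i:ℕ) * u (Sum.inl i) * v (Sum.inr j) else 0 := by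
      intro j
      have : ((i : ℕ) + (j : ℕ) + 2 = n + 1) ↔ j = Fin.rev i := by
        rw [Fin.ext_iff, Fin.val_rev]
        have := i.isLt; have := j.isLt; omega
      simp only [gram, if_pos rfl, this, smul_eq_mul]
      split_ifs <;> ring
    rw [Finset.sum_congr rfl (fun j _ => h2 j), Finset.sum_ite_eq']
    simp
  · have h3 : ∀ i : Fin n, ∑ t : Fin n ⊕ Fin n, u (Sum.inr i) • v t • gram n n (Sum.inr i) t
        = ∑ j : Fin n, u (Sum.inr i) • v (Sum.inl j) • gram n n (Sum.inr i) (Sum.inl j) := by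
      intro i
      rw [Fintype.sum_sum_type]
      have hz : ∀ j : Fin n, u (Sum.inr i) • v (Sum.inr j) • gram n n (Sum.inr i) (Sum.inr j)
          = 0 := by intro j; simp [gram]
      rw [Finset.sum_congr rfl (fun j _ => hz j), Finset.sum_const_zero, add_zero]
    rw [Finset.sum_congr rfl (fun i _ => h3 i), Finset.sum_comm]
    refine Finset.sum_congr rfl fun j _ => ?_
    have h4 : ∀ i : Fin n, u (Sum.inr i) • v (Sum.inl j) • gram n n (Sum.inr i) (Sum.inl j)
        = if i = Fin.rev j then (-1:ℂ)^(j:ℕ) * u (Sum.inr i) * v (Sum.inl j) else 0 := by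
      intro i
      have hc : ((j : ℕ) + (i : ℕ) + 2 = n + 1) ↔ i = Fin.rev j := by
        rw [Fin.ext_iff, Fin.val_rev]; have := i.isLt; have := j.isLt; omega
      simp only [gram, if_pos rfl, hc, smul_eq_mul]
      split_ifs <;> ring
    rw [Finset.sum_congr rfl (fun i _ => h4 i), Finset.sum_ite_eq']
    simp

-- coordinate projection characterizations

lemma EF10_eq (p q : ℕ) : EF p q 1 0 = span ℂ {ee p q 1} := by
  apply le_antisymm
  · rw [EF, span_le]
    rintro v (⟨i, h1, h2, rfl⟩ | ⟨j, h1, h2, rfl⟩)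
    · interval_cases i
      exact subset_span rfl
    · omega
  · rw [span_le]
    intro v hv
    rw [Set.mem_singleton_iff] at hv
    subst hv
    exact subset_span (Or.inl ⟨1, le_rfl, le_rfl, rfl⟩)

lemma beta_e1_right (m' : ℕ) (v : V (m'+2) (m'+2)) :
    beta (m'+2) (m'+2) (ee (m'+2) (m'+2) 1) v = v (Sum.inr ⟨m'+1, by omega⟩) := by
  rw [beta_nn]
  have h2 : ∀ j : Fin (m'+2),
      (-1:ℂ)^(j:ℕ) * ee (m'+2) (m'+2) 1 (Sum.inr (Fin.rev j)) * v (Sum.inl j) = 0 := by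
    intro j; simp [ee]
  rw [Finset.sum_congr rfl (fun j _ => h2 j), Finset.sum_const_zero, add_zero]
  have h1 : ∀ i : Fin (m'+2),
      (-1:ℂ)^(i:ℕ) * ee (m'+2) (m'+2) 1 (Sum.inl i) * v (Sum.inr (Fin.rev i))
      = if i = 0 then v (Sum.inr ⟨m'+1, by omega⟩) else 0 := by
    intro i
    rcases eq_or_ne i 0 with h | h
    · subst h
      have hr : (Fin.rev 0 : Fin (m'+2)) = ⟨m'+1, by omega⟩ := by
        rw [Fin.ext_iff, Fin.val_rev]; simp
      simp [ee, hr]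
    · have hi : (i:ℕ) ≠ 0 := fun hh => h (Fin.ext (by rw [hh]; simp))
      simp [ee, hi, h]
  rw [Finset.sum_congr rfl (fun i _ => h1 i), Finset.sum_ite_eq']
  simp

lemma mem_orth10 (m' : ℕ) (v : V (m'+2) (m'+2)) :
    v ∈ orth (m'+2) (m'+2) (EF (m'+2) (m'+2) 1 0) ↔ v (Sum.inr ⟨m'+1, by omega⟩) = 0 := by
  rw [orth, EF10_eq]
  constructor
  · intro h
    have := h (ee (m'+2) (m'+2) 1) (subset_span rfl)
    rw [beta_e1_right] at this
    exact this
  · intro h n hn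
    rw [Submodule.mem_span_singleton] at hn
    obtain ⟨a, rfl⟩ := hn
    rw [map_smul, LinearMap.smul_apply, beta_e1_right, h,
      smul_zero]

lemma decomp (p q : ℕ) (v : V p q) :
    v = (∑ i : Fin p, v (Sum.inl i) • ee p q ((i:ℕ)+1))
      + ∑ j : Fin q, v (Sum.inr j) • ff p q ((j:ℕ)+1) := by
  funext s
  rw [Pi.add_apply, Finset.sum_apply, Finset.sum_apply]
  cases s with
  | inl a =>
    have h2 : ∀ j : Fin q, (v (Sum.inr j) • ff p q ((j:ℕ)+1)) (Sum.inl a) = 0 := by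
      intro j; simp [ff]
    rw [Finset.sum_congr rfl (fun j _ => h2 j), Finset.sum_const_zero, add_zero]
    have h1 : ∀ i : Fin p, (v (Sum.inl i) • ee p q ((i:ℕ)+1)) (Sum.inl a)
        = if i = a then v (Sum.inl i) else 0 := by
      intro i
      rcases eq_or_ne i a with h | h
      · subst h; simp [ee]
      · have hne : (a:ℕ) ≠ (i:ℕ) := fun hh => h (Fin.ext hh.symm)
        simp [ee, hne, h]
    rw [Finset.sum_congr rfl (fun i _ => h1 i), Finset.sum_ite_eq']
    simp
  | inr a =>
    have h2 : ∀ i : Fin p, (v (Sum.inl i) • ee p q ((i:ℕ)+1)) (Sum.inr a) = 0 := by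
      intro i; simp [ee]
    rw [Finset.sum_congr rfl (fun i _ => h2 i), Finset.sum_const_zero, zero_add]
    have h1 : ∀ j : Fin q, (v (Sum.inr j) • ff p q ((j:ℕ)+1)) (Sum.inr a)
        = if j = a then v (Sum.inr j) else 0 := by
      intro j
      rcases eq_or_ne j a with h | h
      · subst h; simp [ff]
      · have hne : (a:ℕ) ≠ (j:ℕ) := fun hh => h (Fin.ext hh.symm)
        simp [ff, hne, h]
    rw [Finset.sum_congr rfl (fun j _ => h1 j), Finset.sum_ite_eq']
    simp

lemma mem_EFfull (m' : ℕ) (v : V (m'+2) (m'+2)) :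
    v ∈ EF (m'+2) (m'+2) (m'+2) (m'+1) ↔ v (Sum.inr ⟨m'+1, by omega⟩) = 0 := by
  constructor
  · intro hv
    induction hv using span_induction with
    | mem x hx =>
      rcases hx with ⟨i, h1, h2, rfl⟩ | ⟨j, h1, h2, rfl⟩
      · simp [ee]
      · have : m' + 1 + 1 ≠ j := by omega
        simp [ff, this]
    | zero => simp
    | add x y _ _ hx hy => simp [hx, hy]
    | smul a x _ hx => simp [hx]
  · intro hv
    rw [decomp (m'+2) (m'+2) v]
    apply add_mem
    · apply sum_mem
      intro i _
      exact smul_mem _ _ (subset_span (Or.inl ⟨(i:ℕ)+1, by omega, by have := i.isLt; omega, rfl⟩))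
    · apply sum_mem
      intro j _
      rcases eq_or_ne j (⟨m'+1, by omega⟩ : Fin (m'+2)) with h | h
      · subst h; rw [hv, zero_smul]; exact zero_mem _
      · have hj : (j:ℕ) < m' + 1 := by
          have := j.isLt
          rcases Nat.lt_or_ge (j:ℕ) (m'+1) with h' | h'
          · exact h'
          · refine absurd (Fin.ext ?_) h
            show (j:ℕ) = m'+1
            omega
        exact smul_mem _ _ (subset_span (Or.inr ⟨(j:ℕ)+1, by omega, by omega, rfl⟩))

lemma xmap_e1 (p q : ℕ) : xmap p q (ee p q 1) = 0 := by
  funext s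
  cases s with
  | inl a =>
    show (if h : (a:ℕ) + 1 < p then ee p q 1 (Sum.inl ⟨(a:ℕ)+1, h⟩) else 0) = 0
    split
    · simp [ee]
    · rfl
  | inr a =>
    show (if h : (a:ℕ) + 1 < q then ee p q 1 (Sum.inr ⟨(a:ℕ)+1, h⟩) else 0) = 0
    split
    · simp [ee]
    · rfl

lemma xmap_last (m' : ℕ) (v : V (m'+2) (m'+2)) :
    (xmap (m'+2) (m'+2) v) (Sum.inr ⟨m'+1, by omega⟩) = 0 := by
  show (if h : m' + 1 + 1 < m' + 2 then _ else 0) = 0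
  rw [dif_neg (by omega)]

def Qdef (m : ℕ) : V m m →ₗ[ℂ] V (m-1) (m-1) where
  toFun v := Sum.elim
    (fun i => (-Complex.I) * v (Sum.inl ⟨(i:ℕ)+1, by have := i.isLt; omega⟩))
    (fun j => (-Complex.I) * v (Sum.inr ⟨(j:ℕ), by have := j.isLt; omega⟩))
  map_add' u v := by funext s; cases s <;> simp <;> ring
  map_smul' c v := by funext s; cases s <;> simp <;> ring

lemma Qdef_inl (m : ℕ) (v : V m m) (i : Fin (m-1)) :
    Qdef m v (Sum.inl i) = (-Complex.I) * v (Sum.inl ⟨(i:ℕ)+1, by have := i.isLt; omega⟩) := rfl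

lemma Qdef_inr (m : ℕ) (v : V m m) (j : Fin (m-1)) :
    Qdef m v (Sum.inr j) = (-Complex.I) * v (Sum.inr ⟨(j:ℕ), by have := j.isLt; omega⟩) := rfl

lemma Qdef_ee (m : ℕ) (j : ℕ) :
    Qdef m (ee m m (j+1)) = (-Complex.I) • ee (m-1) (m-1) j := by
  funext s
  cases s with
  | inl a =>
    rw [Qdef_inl, Pi.smul_apply]
    have : ((a:ℕ) + 1 + 1 = j + 1) ↔ ((a:ℕ) + 1 = j) := by omega
    simp [ee, this]
  | inr a =>
    rw [Qdef_inr, Pi.smul_apply]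
    simp [ee]

lemma Qdef_ff (m : ℕ) (j : ℕ) :
    Qdef m (ff m m j) = (-Complex.I) • ff (m-1) (m-1) j := by
  funext s
  cases s with
  | inl a =>
    rw [Qdef_inl, Pi.smul_apply]
    simp [ff]
  | inr a =>
    rw [Qdef_inr, Pi.smul_apply]
    simp [ff]

lemma Qdef_e1 (m : ℕ) : Qdef m (ee m m 1) = 0 := by
  funext s
  cases s with
  | inl a =>
    rw [Qdef_inl]
    have : (a:ℕ) + 1 + 1 ≠ 1 := by omega
    simp [ee, this]
  | inr a =>
    rw [Qdef_inr]
    simp [ee]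

lemma Qdef_cond (m : ℕ) : QCondIII1 m (Qdef m) := by
  refine ⟨fun j _ _ => Qdef_ee m j, fun j _ _ => Qdef_ff m j, ?_⟩
  intro u hu
  rw [EF10_eq, Submodule.mem_span_singleton] at hu
  obtain ⟨a, rfl⟩ := hu
  rw [map_smul, Qdef_e1, smul_zero]

lemma Qagree (m' : ℕ) (Q : V (m'+2) (m'+2) →ₗ[ℂ] V (m'+2-1) (m'+2-1))
    (hQ : QCondIII1 (m'+2) Q) (u : V (m'+2) (m'+2))
    (hu : u ∈ EF (m'+2) (m'+2) (m'+2) (m'+1)) : Q u = Qdef (m'+2) u := by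
  induction hu using span_induction with
  | mem x hx =>
    rcases hx with ⟨i, h1, h2, rfl⟩ | ⟨j, h1, h2, rfl⟩
    · rcases Nat.lt_or_ge i 2 with h | h
      · interval_cases i
        rw [hQ.2.2 _ (subset_span (Or.inl ⟨1, le_rfl, le_rfl, rfl⟩)), Qdef_e1]
      · obtain ⟨j, rfl⟩ : ∃ j, i = j + 1 := ⟨i-1, by omega⟩
        rw [hQ.1 j (by omega) (by omega), Qdef_ee]
    · rw [hQ.2.1 j (by omega) (by omega), Qdef_ff]
  | zero => simp
  | add x y _ _ hx hy => rw [map_add, map_add, hx, hy]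
  | smul a x _ hx => rw [map_smul, map_smul, hx]

def lift (m' : ℕ) (w : V (m'+1) (m'+1)) : V (m'+2) (m'+2) :=
  Sum.elim
    (fun i : Fin (m'+2) => if h : 1 ≤ (i:ℕ)
      then Complex.I * w (Sum.inl ⟨(i:ℕ)-1, by have := i.isLt; omega⟩) else 0)
    (fun j : Fin (m'+2) => if h : (j:ℕ) < m'+1
      then Complex.I * w (Sum.inr ⟨(j:ℕ), h⟩) else 0)

lemma lift_last (m' : ℕ) (w : V (m'+1) (m'+1)) :
    lift m' w (Sum.inr ⟨m'+1, by omega⟩) = 0 := by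
  show (if h : m'+1 < m'+1 then _ else 0) = 0
  rw [dif_neg (by omega)]

lemma Qdef_lift (m' : ℕ) (w : V (m'+1) (m'+1)) : Qdef (m'+2) (lift m' w) = w := by
  funext s
  cases s with
  | inl i =>
    rw [Qdef_inl]
    simp only [_root_.lift, Sum.elim_inl, Fin.val_mk]
    rw [dif_pos (by omega)]
    have : (⟨(i:ℕ)+1-1, by omega⟩ : Fin (m'+1)) = i := by
      rw [Fin.ext_iff]; simp
    rw [this, ← mul_assoc]
    simp
  | inr j =>
    rw [Qdef_inr]
    show -Complex.I * (if h : (j:ℕ) < m'+1 then _ else 0) = w (Sum.inr j)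
    rw [dif_pos (show (j:ℕ) < m'+1 by have := j.isLt; omega)]
    have : (⟨(j:ℕ), show (j:ℕ) < m'+1 by have := j.isLt; omega⟩ : Fin (m'+1)) = j := by
      rw [Fin.ext_iff]
    rw [this, ← mul_assoc]
    simp

lemma xmap_inl (p q : ℕ) (v : V p q) (a : Fin p) :
    xmap p q v (Sum.inl a) = if h : (a:ℕ)+1 < p then v (Sum.inl ⟨(a:ℕ)+1, h⟩) else 0 := rfl

lemma xmap_inr (p q : ℕ) (v : V p q) (a : Fin q) :
    xmap p q v (Sum.inr a) = if h : (a:ℕ)+1 < q then v (Sum.inr ⟨(a:ℕ)+1, h⟩) else 0 := rfl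

lemma Qdef_x (m' : ℕ) (v : V (m'+2) (m'+2)) (hv : v (Sum.inr ⟨m'+1, by omega⟩) = 0) :
    Qdef (m'+2) (xmap (m'+2) (m'+2) v) = xmap (m'+1) (m'+1) (Qdef (m'+2) v) := by
  funext s
  cases s with
  | inl i =>
    rw [Qdef_inl, xmap_inl, xmap_inl]
    have hi := i.isLt
    split_ifs with h1 h2 h2
    · rw [Qdef_inl]
    · exfalso; simp at h1 h2 <;> omega
    · exfalso; simp at h1 h2 <;> omega
    · rw [mul_zero]
  | inr j =>
    rw [Qdef_inr, xmap_inr, xmap_inr]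
    have hj := j.isLt
    split_ifs with h1 h2 h2
    · rw [Qdef_inr]
    · -- h1 true, h2 false: j+1 = m'+1
      have : v (Sum.inr ⟨((⟨(j:ℕ), by omega⟩ : Fin (m'+2)) : ℕ) + 1, h1⟩) = 0 := by
        rw [← hv]
        exact congrArg (fun t => v (Sum.inr t)) (Fin.ext (by simp; omega))
      rw [this, mul_zero]
    · exfalso; simp at h1 h2 <;> omega
    · rw [mul_zero]

lemma neg_I_ne : (-Complex.I) ≠ 0 := by simp [Complex.I_ne_zero]

lemma Qdef_inj (m' : ℕ) (u : V (m'+2) (m'+2)) (hu : u (Sum.inr ⟨m'+1, by omega⟩) = 0)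
    (h0 : Qdef (m'+2) u = 0) : u = u (Sum.inl 0) • ee (m'+2) (m'+2) 1 := by
  funext s
  cases s with
  | inl a =>
    rcases eq_or_ne ((a:ℕ)) 0 with h | h
    · have h1 : u (Sum.inl a) = u (Sum.inl 0) :=
        congrArg (fun t => u (Sum.inl t)) (Fin.ext (by simpa using h))
      simp [ee, h, h1, show a = 0 from Fin.ext (by rw [h]; simp)]
    · have hz := congrFun h0 (Sum.inl (⟨(a:ℕ)-1, by have := a.isLt; omega⟩ : Fin (m'+1)))
      rw [Qdef_inl, Pi.zero_apply] at hz
      rcases mul_eq_zero.mp hz with h' | h'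
      · exact absurd h' neg_I_ne
      · have hval : u (Sum.inl a) = 0 := by
          rw [← h']
          exact congrArg (fun t => u (Sum.inl t)) (Fin.ext (by simp; omega))
        simp [ee, h, hval, show a ≠ 0 from fun ha => h (by rw [ha]; simp)]
  | inr b =>
    have hb := b.isLt
    rcases Nat.lt_or_ge (b:ℕ) (m'+1) with h | h
    · have hz := congrFun h0 (Sum.inr (⟨(b:ℕ), h⟩ : Fin (m'+1)))
      rw [Qdef_inr, Pi.zero_apply] at hz
      rcases mul_eq_zero.mp hz with h' | h'
      · exact absurd h' neg_I_ne
      · have hval : u (Sum.inr b) = 0 := by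
          rw [← h']
        simp [ee, hval]
    · have hval : u (Sum.inr b) = 0 := by
        rw [← hu]
        exact congrArg (fun t => u (Sum.inr t)) (Fin.ext (by simp; omega))
      simp [ee, hval]

lemma beta_Q (m' : ℕ) (u v : V (m'+2) (m'+2))
    (hu : u (Sum.inr ⟨m'+1, by omega⟩) = 0) (hv : v (Sum.inr ⟨m'+1, by omega⟩) = 0) :
    beta (m'+1) (m'+1) (Qdef (m'+2) u) (Qdef (m'+2) v) = beta (m'+2) (m'+2) u v := by
  have hrev0 : (Fin.rev 0 : Fin (m'+2)) = ⟨m'+1, by omega⟩ := by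
    rw [Fin.ext_iff, Fin.val_rev]; simp
  have hII : (-Complex.I) * (-Complex.I) = -1 := by
    rw [neg_mul_neg, Complex.I_mul_I]
  rw [beta_nn, beta_nn]
  congr 1
  · rw [Fin.sum_univ_succ
      (f := fun i : Fin (m'+2) => (-1:ℂ)^(i:ℕ) * u (Sum.inl i) * v (Sum.inr (Fin.rev i)))]
    rw [hrev0, hv, mul_zero, zero_add]
    refine Finset.sum_congr rfl fun i _ => ?_
    rw [Qdef_inl, Qdef_inr]
    have hB : v (Sum.inr (⟨((Fin.rev i : Fin (m'+1)) : ℕ),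
        by have := (Fin.rev i).isLt; omega⟩ : Fin (m'+2))) = v (Sum.inr (Fin.rev i.succ)) := by
      refine congrArg (fun t => v (Sum.inr t)) (Fin.ext ?_)
      rw [Fin.val_mk, Fin.val_rev, Fin.val_rev, Fin.val_succ]
      omega
    rw [hB]
    have hA : u (Sum.inl (⟨(i:ℕ)+1, by have := i.isLt; omega⟩ : Fin (m'+2)))
        = u (Sum.inl i.succ) := rfl
    rw [hA, Fin.val_succ, pow_succ]
    ring_nf
    rw [Complex.I_sq]
    ring
  · rw [Fin.sum_univ_succ
      (f := fun j : Fin (m'+2) => (-1:ℂ)^(j:ℕ) * u (Sum.inr (Fin.rev j)) * v (Sum.inl j))]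
    rw [hrev0, hu, mul_zero, zero_mul, zero_add]
    refine Finset.sum_congr rfl fun j _ => ?_
    rw [Qdef_inl, Qdef_inr]
    have hB : u (Sum.inr (⟨((Fin.rev j : Fin (m'+1)) : ℕ),
        by have := (Fin.rev j).isLt; omega⟩ : Fin (m'+2))) = u (Sum.inr (Fin.rev j.succ)) := by
      refine congrArg (fun t => u (Sum.inr t)) (Fin.ext ?_)
      rw [Fin.val_mk, Fin.val_rev, Fin.val_rev, Fin.val_succ]
      omega
    rw [hB]
    have hA : v (Sum.inl (⟨(j:ℕ)+1, by have := j.isLt; omega⟩ : Fin (m'+2)))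
        = v (Sum.inl j.succ) := rfl
    rw [hA, Fin.val_succ, pow_succ]
    ring_nf
    rw [Complex.I_sq]
    ring


theorem statement1 (m : ℕ) (hm : 2 ≤ m) :
    EF m m 1 0 ≤ orth m m (EF m m 1 0) ∧
    orth m m (EF m m 1 0) = EF m m m (m-1) ∧
    (EF m m 1 0).map (xmap m m) ≤ EF m m 1 0 ∧
    (orth m m (EF m m 1 0)).map (xmap m m) ≤ orth m m (EF m m 1 0) ∧
    (∃ Q : V m m →ₗ[ℂ] V (m-1) (m-1), QCondIII1 m Q) ∧
    (∀ Q : V m m →ₗ[ℂ] V (m-1) (m-1), QCondIII1 m Q →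
      (∀ u ∈ orth m m (EF m m 1 0), Q u = 0 → u ∈ EF m m 1 0) ∧
      (∀ w : V (m-1) (m-1), ∃ u ∈ orth m m (EF m m 1 0), Q u = w) ∧
      (∀ u ∈ orth m m (EF m m 1 0), ∀ v ∈ orth m m (EF m m 1 0),
        beta (m-1) (m-1) (Q u) (Q v) = beta m m u v) ∧
      (∀ u ∈ orth m m (EF m m 1 0),
        Q (xmap m m u) = xmap (m-1) (m-1) (Q u))) := by
  obtain ⟨m', rfl⟩ : ∃ m', m = m' + 2 := ⟨m - 2, by omega⟩
  have orthEF : orth (m'+2) (m'+2) (EF (m'+2) (m'+2) 1 0) = EF (m'+2) (m'+2) (m'+2) (m'+1) := by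
    ext v; rw [mem_orth10, mem_EFfull]
  refine ⟨?_, orthEF, ?_, ?_, ⟨Qdef (m'+2), Qdef_cond (m'+2)⟩, ?_⟩
  · intro u hu
    rw [mem_orth10]
    rw [EF10_eq, Submodule.mem_span_singleton] at hu
    obtain ⟨a, rfl⟩ := hu
    simp [ee]
  · rw [EF10_eq, Submodule.map_span, Set.image_singleton, xmap_e1, span_zero_singleton]
    exact bot_le
  · intro y hy
    rw [Submodule.mem_map] at hy
    obtain ⟨v, hv, rfl⟩ := hy
    rw [mem_orth10]
    exact xmap_last m' v
  · intro Q hQ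
    refine ⟨?_, ?_, ?_, ?_⟩
    · intro u hu h0
      have hEF := orthEF ▸ hu
      have hlast := (mem_orth10 m' u).mp hu
      have hQu : Qdef (m'+2) u = 0 := by rw [← Qagree m' Q hQ u hEF]; exact h0
      rw [EF10_eq, Submodule.mem_span_singleton]
      exact ⟨u (Sum.inl 0), (Qdef_inj m' u hlast hQu).symm⟩
    · intro w
      refine ⟨lift m' w, ?_, ?_⟩
      · rw [mem_orth10]; exact lift_last m' w
      · rw [Qagree m' Q hQ _ ((mem_EFfull m' _).mpr (lift_last m' w)), Qdef_lift]
    · intro u hu v hv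
      rw [Qagree m' Q hQ u (orthEF ▸ hu), Qagree m' Q hQ v (orthEF ▸ hv)]
      exact beta_Q m' u v ((mem_orth10 m' u).mp hu) ((mem_orth10 m' v).mp hv)
    · intro u hu
      have h1 : xmap (m'+2) (m'+2) u ∈ EF (m'+2) (m'+2) (m'+2) (m'+1) :=
        (mem_EFfull m' _).mpr (xmap_last m' u)
      rw [Qagree m' Q hQ _ h1, Qagree m' Q hQ u (orthEF ▸ hu)]
      exact Qdef_x m' u ((mem_orth10 m' u).mp hu)
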